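/- With the notation of the path decomposition: the matrix identity D(C₁ − 1, ..., C_n − 1) = (P_ij)·(M − 1) holds in Q⟨⟨a_ij⟩⟩, where D(u₁,...,u_n) is the diagonal matrix with entries u_i. -/

import Mathlib

/-! Setup: the ring `ℚ⟨⟨a_ij⟩⟩` of noncommutative power series in the `n²` letters
`a_ij` (`1 ≤ i,j ≤ n`) is realized via its graded embedding into `ℚ⟨a_ij⟩[[t]]`,
sending a letter to `t·a_ij`: a noncommutative series is determined by its homogeneous
components, which are noncommutative polynomials, i.e. elements of the free algebra.
Words over the alphabet `{a_ij}` are lists of edges `(i,j)` of the complete digraph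
on the vertex set `Fin n`, identified with paths. -/

/-- An edge of the complete digraph on `Fin n`, i.e. a letter `a_ij`. -/
abbrev Edge (n : ℕ) := Fin n × Fin n

/-- `isPath i j w = true` iff the word `w` is a path from `i` to `j`. -/
def isPath {n : ℕ} (i j : Fin n) : List (Edge n) → Bool
  | [] => decide (i = j)
  | e :: rest => decide (i = e.1) && isPath e.2 j rest

/-- `firstRet i v w = true` iff `w` is a nonempty path from `v` which reaches `i`
exactly at its last step (and never before).  The code `C_i` (nonempty paths `i → i`
not passing through `i` internally) is `firstRet i i`. -/
def firstRet {n : ℕ} (i v : Fin n) : List (Edge n) → Bool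
  | [] => false
  | e :: rest =>
      decide (v = e.1) && (if e.2 = i then rest.isEmpty else firstRet i e.2 rest)

/-- `avoidTo i v j w = true` iff `w` is a path from `v` to `j` never visiting `i`
after its starting point.  `P_ij` is `avoidTo i i j` (so `P_ii = {ε}`). -/
def avoidTo {n : ℕ} (i v j : Fin n) : List (Edge n) → Bool
  | [] => decide (v = j)
  | e :: rest => decide (v = e.1) && !decide (e.2 = i) && avoidTo i e.2 j rest

/-- `avoidFrom i v w = true` iff `w` is a path from `v` never visiting `i` after its
starting point.  `P_i = ∑_j P_ij` is `avoidFrom i i`. -/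
def avoidFrom {n : ℕ} (i v : Fin n) : List (Edge n) → Bool
  | [] => true
  | e :: rest => decide (v = e.1) && !decide (e.2 = i) && avoidFrom i e.2 rest

/-- The element of the free algebra corresponding to a word. -/
noncomputable def wordOf {n : ℕ} (w : List (Edge n)) : FreeAlgebra ℚ (Edge n) :=
  (w.map (FreeAlgebra.ι ℚ)).prod

/-- The characteristic series (an element of `ℚ⟨⟨a_ij⟩⟩`) of the language of words
satisfying `p`: its homogeneous component of degree `m` is the sum of all words of
length `m` in the language. -/
noncomputable def ser {n : ℕ} (p : List (Edge n) → Bool) :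
    PowerSeries (FreeAlgebra ℚ (Edge n)) :=
  PowerSeries.mk fun m =>
    ∑ w : List.Vector (Edge n) m, if p w.toList then wordOf w.toList else 0

/-- The generic `n × n` matrix `M = (a_ij)` over `ℚ⟨⟨a_ij⟩⟩`. -/
noncomputable def genM (n : ℕ) :
    Matrix (Fin n) (Fin n) (PowerSeries (FreeAlgebra ℚ (Edge n))) :=
  Matrix.of fun i j => PowerSeries.X * PowerSeries.C (FreeAlgebra.ι ℚ (i, j))

/-! Auxiliary lemmas -/
lemma wordOf_append {n : ℕ} (w : List (Edge n)) (e : Edge n) :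
    wordOf (w ++ [e]) = wordOf w * FreeAlgebra.ι ℚ e := by
  simp [wordOf]

lemma firstRet_snoc {n : ℕ} (i : Fin n) (e : Edge n) :
    ∀ (w : List (Edge n)) (v : Fin n),
      (firstRet i v (w ++ [e]) = true) ↔
        (avoidTo i v e.1 w = true ∧ e.2 = i)
  | [], v => by
      by_cases h : e.2 = i <;> simp [firstRet, avoidTo, h]
  | f :: rest, v => by
      simp only [List.cons_append, firstRet, avoidTo, Bool.and_eq_true, decide_eq_true_eq,
        Bool.not_eq_true', decide_eq_false_iff_not]
      by_cases h : f.2 = i <;>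
        simp [h, firstRet_snoc i e rest f.2, and_assoc]

lemma avoidTo_snoc {n : ℕ} (i k : Fin n) (e : Edge n) :
    ∀ (w : List (Edge n)) (v : Fin n),
      (avoidTo i v k (w ++ [e]) = true) ↔
        (avoidTo i v e.1 w = true ∧ ¬ e.2 = i ∧ e.2 = k)
  | [], v => by simp [avoidTo, and_assoc]
  | f :: rest, v => by
      simp only [List.cons_append, avoidTo, Bool.and_eq_true, decide_eq_true_eq,
        Bool.not_eq_true', decide_eq_false_iff_not]
      simp [avoidTo_snoc i k e rest f.2, and_assoc]

def snocEquiv (α : Type*) (m : ℕ) :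
    List.Vector α m × α ≃ List.Vector α (m + 1) where
  toFun p := p.1.snoc p.2
  invFun v := (v.reverse.tail.reverse, v.reverse.head)
  left_inv p := by
    simp [List.Vector.reverse_snoc, List.Vector.reverse_reverse]
  right_inv v := by
    have h : ∀ (xs : List.Vector α m) (x : α),
        xs.snoc x = (x ::ᵥ xs.reverse).reverse := by
      intro xs x
      rw [List.Vector.reverse_cons, List.Vector.reverse_reverse]
    simp only [h, List.Vector.reverse_reverse, List.Vector.cons_head_tail]

lemma toList_snoc {α : Type*} {m : ℕ} (xs : List.Vector α m) (x : α) :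
    (xs.snoc x).toList = xs.toList ++ [x] := by
  show (xs ++ (x ::ᵥ List.Vector.nil)).toList = _
  rw [List.Vector.toList_append]
  rfl

lemma key {n : ℕ} (i k : Fin n) (m : ℕ) :
    ∑ j : Fin n, (∑ w : List.Vector (Edge n) m,
        if avoidTo i i j w.toList then wordOf w.toList else 0) * FreeAlgebra.ι ℚ (j, k)
      = (∑ w : List.Vector (Edge n) (m + 1),
          if avoidTo i i k w.toList then wordOf w.toList else 0)
        + (if i = k then
            ∑ w : List.Vector (Edge n) (m + 1),
              if firstRet i i w.toList then wordOf w.toList else 0 else 0) := by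
  rw [← Equiv.sum_comp (snocEquiv (Edge n) m)
      (fun w : List.Vector (Edge n) (m + 1) =>
        if avoidTo i i k w.toList then wordOf w.toList else 0),
      ← Equiv.sum_comp (snocEquiv (Edge n) m)
      (fun w : List.Vector (Edge n) (m + 1) =>
        if firstRet i i w.toList then wordOf w.toList else 0)]
  simp only [snocEquiv, Equiv.coe_fn_mk, toList_snoc, avoidTo_snoc, firstRet_snoc,
    wordOf_append]
  simp only [Finset.sum_mul, Fintype.sum_prod_type]
  rw [Finset.sum_comm]
  by_cases hik : i = k
  · subst hik
    rw [if_pos rfl]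
    simp only [← Finset.sum_add_distrib]
    refine Finset.sum_congr rfl fun w _ => Finset.sum_congr rfl fun j' _ => ?_
    by_cases hA : avoidTo i i j' w.toList <;> simp [hA]
  · simp only [hik, if_false, add_zero]
    refine Finset.sum_congr rfl fun w _ => Finset.sum_congr rfl fun j' _ => ?_
    have hcond : ∀ k' : Fin n, (¬k' = i ∧ k' = k) ↔ k' = k := fun k' =>
      ⟨And.right, fun h => ⟨h ▸ fun h' => hik h'.symm, h⟩⟩
    by_cases hA : avoidTo i i j' w.toList <;> simp [hA, hcond]

lemma coeff_zero_ser {n : ℕ} (p : List (Edge n) → Bool) :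
    PowerSeries.coeff 0 (ser p) = if p [] then 1 else 0 := by
  haveI : Unique (List.Vector (Edge n) 0) :=
    ⟨⟨List.Vector.nil⟩, fun v => v.eq_nil⟩
  rw [ser, PowerSeries.coeff_mk, Fintype.sum_unique]
  simp [wordOf]

/-- In `ℚ⟨⟨a_ij⟩⟩`, the matrix identity
`D(C₁ − 1, …, C_n − 1) = (P_ij) · (M − 1)` holds, where `M` is the generic matrix,
`C_i` the first-return series at vertex `i`, and `P_ij` the series of paths from `i`
to `j` not passing through `i` after the start (`P_ii = 1`). -/
theorem stmt10 (n : ℕ) :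
    Matrix.diagonal (fun i => ser (firstRet i i) - 1) =
      Matrix.of (fun i j => ser (avoidTo i i j)) * (genM n - 1) := by
  ext i k m
  rw [Matrix.mul_apply]
  have hdiag : Matrix.diagonal (fun i : Fin n => ser (firstRet i i) - 1) i k
      = if i = k then ser (firstRet i i) - 1 else 0 := by
    rw [Matrix.diagonal_apply]
  rw [hdiag]
  have hterm : ∀ j, Matrix.of (fun i j => ser (avoidTo i i j)) i j * (genM n - 1) j k
      = ser (avoidTo i i j) * (PowerSeries.X * PowerSeries.C (FreeAlgebra.ι ℚ (j, k)))
        - if j = k then ser (avoidTo i i j) else 0 := by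
    intro j
    simp only [Matrix.sub_apply, Matrix.one_apply, Matrix.of_apply, genM, mul_sub]
    split <;> simp
  simp only [hterm]
  rw [map_sum]
  rcases m with _ | m
  · have hX : ∀ (f : PowerSeries (FreeAlgebra ℚ (Edge n))) (a : FreeAlgebra ℚ (Edge n)),
        PowerSeries.coeff 0 (f * (PowerSeries.X * PowerSeries.C a)) = 0 := by
      intro f a
      rw [← mul_assoc, PowerSeries.coeff_mul_C, PowerSeries.coeff_zero_mul_X, zero_mul]
    simp only [map_sub, hX, zero_sub, apply_ite (PowerSeries.coeff 0),
      map_zero, coeff_zero_ser, map_one]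
    rw [Finset.sum_neg_distrib, Finset.sum_ite_eq' Finset.univ k]
    simp [avoidTo, firstRet]
    by_cases h : i = k <;> simp [h]
  · have hX : ∀ (p : List (Edge n) → Bool) (a : FreeAlgebra ℚ (Edge n)),
        PowerSeries.coeff (m + 1) (ser p * (PowerSeries.X * PowerSeries.C a))
          = PowerSeries.coeff m (ser p) * a := by
      intro p a
      rw [← mul_assoc, PowerSeries.coeff_mul_C, PowerSeries.coeff_succ_mul_X]
    simp only [map_sub, hX, apply_ite (PowerSeries.coeff (m + 1)),
      map_zero, map_one, PowerSeries.coeff_one, Nat.succ_ne_zero, if_false]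
    rw [Finset.sum_sub_distrib, Finset.sum_ite_eq' Finset.univ k]
    have hkey := key i k m
    simp only [ser, PowerSeries.coeff_mk]
    rw [hkey]
    simp
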